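/- Let n₁ ≥ 1 and K = 0, let (λ₁,…,λ_{n₁}, μ₁,…,μ_{n₁}) be a real-analytic solution of the system (ODE) on an open interval I with τ not identically zero, and suppose there are real-analytic functions φ, ψ on I with μᵢ = φλᵢ + ψ for all i. Then φ is not a constant function on I. -/

import Mathlib

open Filter Topology Set

/-- If a product of two functions vanishes on a preconnected open set, the second is analytic,
and the first is continuous and nonzero at some point, then the second vanishes identically. -/
private lemma prod_eq_zero_aux {f g : ℝ → ℝ} {U : Set ℝ}
    (hU : IsPreconnected U) (hUo : IsOpen U)
    (hg : AnalyticOnNhd ℝ g U)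
    (hfg : ∀ t ∈ U, f t * g t = 0)
    {t₀ : ℝ} (ht₀ : t₀ ∈ U) (hf : ContinuousAt f t₀) (hft₀ : f t₀ ≠ 0) :
    Set.EqOn g 0 U := by
  have hev : g =ᶠ[𝓝 t₀] 0 := by
    have h1 : ∀ᶠ s in 𝓝 t₀, f s ≠ 0 := hf.eventually_ne hft₀
    filter_upwards [h1, hUo.mem_nhds ht₀] with s hs1 hs2
    rcases mul_eq_zero.mp (hfg s hs2) with h | h
    · exact absurd h hs1
    · exact h
  exact hg.eqOn_zero_of_preconnected_of_eventuallyEq_zero hU ht₀ hev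

/-- Lemma (`vp ≠ const`): `φ` is not a constant function on `I`. -/
theorem stmt_13 (n₁ : ℕ) (hn : 1 ≤ n₁) (K : ℝ) (hK : K = 0)
    (I : Set ℝ) (hI : IsOpen I) (hIconn : I.OrdConnected)
    (lam mu : Fin n₁ → ℝ → ℝ)
    (hlam : ∀ i, AnalyticOnNhd ℝ (lam i) I)
    (hmu : ∀ i, AnalyticOnNhd ℝ (mu i) I)
    (tau : ℝ → ℝ) (htau : ∀ t, tau t = (2/3) * ∑ i, lam i t)
    (hode1 : ∀ i, ∀ t ∈ I, HasDerivAt (lam i) ((tau t / 2 + lam i t) * mu i t) t)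
    (hode2 : ∀ i, ∀ t ∈ I,
      HasDerivAt (mu i) ((mu i t) ^ 2 - tau t / 2 * lam i t + K) t)
    (hode3 : ∀ t ∈ I,
      -(deriv (deriv tau) t) + deriv tau t * (∑ i, mu i t)
        + tau t * ((tau t) ^ 2 / 4 - ((n₁ : ℝ) + 1) * K + ∑ i, (lam i t) ^ 2) = 0)
    (htau_ne : ¬ ∀ t ∈ I, tau t = 0)
    (phi psi : ℝ → ℝ)
    (hphi : AnalyticOnNhd ℝ phi I) (hpsi : AnalyticOnNhd ℝ psi I)
    (hlin : ∀ i, ∀ t ∈ I, mu i t = phi t * lam i t + psi t) :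
    ¬ ∃ c : ℝ, ∀ t ∈ I, phi t = c := by
  subst hK
  rintro ⟨c, hc⟩
  have hIpre : IsPreconnected I := hIconn.isPreconnected
  push_neg at htau_ne
  obtain ⟨t₀, ht₀I, ht₀⟩ := htau_ne
  have hν : (1:ℝ) ≤ (n₁:ℝ) := by exact_mod_cast hn
  set i0 : Fin n₁ := ⟨0, hn⟩ with hi0
  have hlin' : ∀ i, ∀ t ∈ I, mu i t = c * lam i t + psi t := by
    intro i t ht
    rw [← hc t ht]; exact hlin i t ht
  have htauEq : tau = fun t => 2/3 * ∑ i, lam i t := funext htau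
  -- tau is analytic on I
  have htauA : AnalyticOnNhd ℝ tau I := by
    rw [htauEq]
    exact analyticOnNhd_const.mul (Finset.analyticOnNhd_fun_sum Finset.univ fun i _ => hlam i)
  -- derivative of tau
  have htau' : ∀ t ∈ I, HasDerivAt tau (2/3 * ∑ i, (tau t / 2 + lam i t) * mu i t) t := by
    intro t ht
    have h : HasDerivAt (fun y => 2/3 * ∑ i, lam i y)
        (2/3 * ∑ i, (tau t / 2 + lam i t) * mu i t) t :=
      (HasDerivAt.fun_sum fun i _ => hode1 i t ht).const_mul (2/3)
    rw [← htauEq] at h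
    exact h
  -- psi is differentiable
  have hpsi' : ∀ t ∈ I, HasDerivAt psi (deriv psi t) t := fun t ht =>
    ((hpsi t ht).differentiableAt).hasDerivAt
  -- key identity from differentiating the linear relation
  have hkey : ∀ i, ∀ t ∈ I,
      lam i t * (c * psi t - (1+c^2)/2 * tau t)
        = deriv psi t + c * (tau t / 2) * psi t - (psi t)^2 := by
    intro i t ht
    have hev : mu i =ᶠ[𝓝 t] fun s => c * lam i s + psi s := by
      filter_upwards [hI.mem_nhds ht] with s hs using hlin' i s hs
    have h1 : HasDerivAt (fun s => c * lam i s + psi s)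
        ((mu i t)^2 - tau t / 2 * lam i t + 0) t :=
      (hode2 i t ht).congr_of_eventuallyEq hev.symm
    have h2 : HasDerivAt (fun s => c * lam i s + psi s)
        (c * ((tau t / 2 + lam i t) * mu i t) + deriv psi t) t :=
      ((hode1 i t ht).const_mul c).add (hpsi' t ht)
    have h3 := h1.unique h2
    have hm := hlin' i t ht
    rw [hm] at h3
    linear_combination h3
  by_cases hAll : ∀ i, ∀ t ∈ I, lam i t = lam i0 t
  · -- all lam equal: use the third ODE
    -- second derivative of tau
    have hg' : ∀ t ∈ I, HasDerivAt (fun s => ∑ i, (tau s / 2 + lam i s) * mu i s)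
        (∑ i, (((2/3 * ∑ j, (tau t / 2 + lam j t) * mu j t)/2
            + (tau t / 2 + lam i t) * mu i t) * mu i t
          + (tau t / 2 + lam i t) * ((mu i t)^2 - tau t / 2 * lam i t + 0))) t := by
      intro t ht
      exact HasDerivAt.fun_sum fun i _ =>
        (((htau' t ht).div_const 2).add (hode1 i t ht)).mul (hode2 i t ht)
    have hdd : ∀ t ∈ I, deriv (deriv tau) t
        = 2/3 * ∑ i, (((2/3 * ∑ j, (tau t / 2 + lam j t) * mu j t)/2
            + (tau t / 2 + lam i t) * mu i t) * mu i t
          + (tau t / 2 + lam i t) * ((mu i t)^2 - tau t / 2 * lam i t + 0)) := by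
      intro t ht
      have hev : deriv tau =ᶠ[𝓝 t]
          fun s => 2/3 * ∑ i, (tau s / 2 + lam i s) * mu i s := by
        filter_upwards [hI.mem_nhds ht] with s hs using (htau' s hs).deriv
      rw [hev.deriv_eq]
      exact ((hg' t ht).const_mul (2/3)).deriv
    have hmu_eq : ∀ i, ∀ t ∈ I, mu i t = mu i0 t := by
      intro i t ht
      rw [hlin' i t ht, hlin' i0 t ht, hAll i t ht]
    -- key pointwise polynomial identity
    have hprod : ∀ t ∈ I, lam i0 t *
        ((((n₁:ℝ)+3)*(6-2*(n₁:ℝ)))*(mu i0 t)^2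
          - 2*(n₁:ℝ)*((n₁:ℝ)+6)*(lam i0 t)^2) = 0 := by
      intro t ht
      have hsumg : ∑ j, (tau t / 2 + lam j t) * mu j t
          = (n₁:ℝ) * ((tau t / 2 + lam i0 t) * mu i0 t) := by
        rw [Finset.sum_congr rfl fun j _ => by rw [hAll j t ht, hmu_eq j t ht]]
        simp [Finset.sum_const, Finset.card_univ, nsmul_eq_mul]
      have hsum2 : ∑ i, mu i t = (n₁:ℝ) * mu i0 t := by
        rw [Finset.sum_congr rfl fun j _ => hmu_eq j t ht]
        simp [Finset.sum_const, Finset.card_univ, nsmul_eq_mul]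
      have hsum3 : ∑ i, (lam i t)^2 = (n₁:ℝ) * (lam i0 t)^2 := by
        rw [Finset.sum_congr rfl fun j (_ : j ∈ Finset.univ) => by rw [hAll j t ht]]
        simp [Finset.sum_const, Finset.card_univ, nsmul_eq_mul]
      have hT : tau t = 2/3 * ((n₁:ℝ) * lam i0 t) := by
        rw [htau t, Finset.sum_congr rfl fun j (_ : j ∈ Finset.univ) => by rw [hAll j t ht]]
        simp [Finset.sum_const, Finset.card_univ, nsmul_eq_mul]
      have hsumG : ∑ i, (((2/3 * ∑ j, (tau t / 2 + lam j t) * mu j t)/2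
            + (tau t / 2 + lam i t) * mu i t) * mu i t
          + (tau t / 2 + lam i t) * ((mu i t)^2 - tau t / 2 * lam i t + 0))
          = (n₁:ℝ) * (((2/3 * ((n₁:ℝ) * ((tau t / 2 + lam i0 t) * mu i0 t)))/2
            + (tau t / 2 + lam i0 t) * mu i0 t) * mu i0 t
          + (tau t / 2 + lam i0 t) * ((mu i0 t)^2 - tau t / 2 * lam i0 t + 0)) := by
        rw [Finset.sum_congr rfl fun j _ => by rw [hAll j t ht, hmu_eq j t ht, hsumg]]
        simp only [Finset.sum_const, Finset.card_univ, Fintype.card_fin, nsmul_eq_mul] <;>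
          ring
      have hE := hode3 t ht
      rw [hdd t ht, (htau' t ht).deriv, hsumG, hsumg, hsum2, hsum3, hT] at hE
      have h2n : (2*(n₁:ℝ)) * (lam i0 t *
          ((((n₁:ℝ)+3)*(6-2*(n₁:ℝ)))*(mu i0 t)^2
            - 2*(n₁:ℝ)*((n₁:ℝ)+6)*(lam i0 t)^2)) = 0 := by
        linear_combination (-27 : ℝ) * hE
      have h2nne : (2*(n₁:ℝ)) ≠ 0 := by positivity
      exact (mul_eq_zero.mp h2n).resolve_left h2nne
    by_cases hlam0 : ∀ t ∈ I, lam i0 t = 0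
    · apply ht₀
      rw [htau t₀, Finset.sum_eq_zero fun j _ => by
        rw [hAll j t₀ ht₀I, hlam0 t₀ ht₀I]]
      ring
    · push_neg at hlam0
      obtain ⟨t₁, ht₁I, hne₁⟩ := hlam0
      -- the analytic function P μ² - Q λ² vanishes identically on I
      have hF2A : AnalyticOnNhd ℝ (fun s => (((n₁:ℝ)+3)*(6-2*(n₁:ℝ)))*(mu i0 s)^2
          - 2*(n₁:ℝ)*((n₁:ℝ)+6)*(lam i0 s)^2) I :=
        (analyticOnNhd_const.mul ((hmu i0).pow 2)).sub
          (analyticOnNhd_const.mul ((hlam i0).pow 2))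
      have hF2zero : Set.EqOn (fun s => (((n₁:ℝ)+3)*(6-2*(n₁:ℝ)))*(mu i0 s)^2
          - 2*(n₁:ℝ)*((n₁:ℝ)+6)*(lam i0 s)^2) 0 I :=
        prod_eq_zero_aux hIpre hI hF2A hprod ht₁I
          ((hlam i0 t₁ ht₁I).continuousAt) hne₁
      -- derive lam i0 = 0 on I, contradicting t₁
      apply hne₁
      have hT : tau t₁ = 2/3 * ((n₁:ℝ) * lam i0 t₁) := by
        rw [htau t₁, Finset.sum_congr rfl fun j (_ : j ∈ Finset.univ) => by
          rw [hAll j t₁ ht₁I]]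
        simp [Finset.sum_const, Finset.card_univ, nsmul_eq_mul]
      have hF2t : (((n₁:ℝ)+3)*(6-2*(n₁:ℝ)))*(mu i0 t₁)^2
          - 2*(n₁:ℝ)*((n₁:ℝ)+6)*(lam i0 t₁)^2 = 0 := hF2zero ht₁I
      have hd1 : HasDerivAt (fun s => (((n₁:ℝ)+3)*(6-2*(n₁:ℝ)))*(mu i0 s)^2
          - 2*(n₁:ℝ)*((n₁:ℝ)+6)*(lam i0 s)^2)
          ((((n₁:ℝ)+3)*(6-2*(n₁:ℝ)))*(2*(mu i0 t₁)*((mu i0 t₁)^2 - tau t₁/2*lam i0 t₁ + 0))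
            - 2*(n₁:ℝ)*((n₁:ℝ)+6)*(2*(lam i0 t₁)*((tau t₁/2 + lam i0 t₁)*mu i0 t₁))) t₁ := by
        have h1 := ((hode2 i0 t₁ ht₁I).fun_pow 2).const_mul ((((n₁:ℝ)+3)*(6-2*(n₁:ℝ))))
        have h2 := ((hode1 i0 t₁ ht₁I).fun_pow 2).const_mul (2*(n₁:ℝ)*((n₁:ℝ)+6))
        have h3 := h1.fun_sub h2
        refine h3.congr_deriv ?_
        push_cast
        ring
      have hd0 : HasDerivAt (fun s => (((n₁:ℝ)+3)*(6-2*(n₁:ℝ)))*(mu i0 s)^2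
          - 2*(n₁:ℝ)*((n₁:ℝ)+6)*(lam i0 s)^2) 0 t₁ := by
        have hev : (fun s => (((n₁:ℝ)+3)*(6-2*(n₁:ℝ)))*(mu i0 s)^2
            - 2*(n₁:ℝ)*((n₁:ℝ)+6)*(lam i0 s)^2) =ᶠ[𝓝 t₁] fun _ => (0:ℝ) := by
          filter_upwards [hI.mem_nhds ht₁I] with s hs using hF2zero hs
        exact (hasDerivAt_const t₁ (0:ℝ)).congr_of_eventuallyEq hev
      have hzero := hd1.unique hd0
      rw [hT] at hzero
      have haam : (lam i0 t₁)^2 * mu i0 t₁ * (2/3*(n₁:ℝ)*(18+12*(n₁:ℝ))) = 0 := by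
        linear_combination 2*(mu i0 t₁)*hF2t - hzero
      have hcoef : (2/3*(n₁:ℝ)*(18+12*(n₁:ℝ))) ≠ 0 := by positivity
      have haam' := (mul_eq_zero.mp haam).resolve_right hcoef
      by_contra ha
      rcases mul_eq_zero.mp haam' with h | h
      · exact ha (pow_eq_zero_iff two_ne_zero |>.mp h)
      · -- mu i0 t₁ = 0, then from hF2t, Q a² = 0, so a = 0
        rw [h] at hF2t
        have hQ : (0:ℝ) < 2*(n₁:ℝ)*((n₁:ℝ)+6) := by positivity
        have : (lam i0 t₁)^2 = 0 := by nlinarith [hF2t]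
        exact ha (pow_eq_zero_iff two_ne_zero |>.mp this)
  · -- not all lam equal: the linear factor argument, no third ODE needed
    push_neg at hAll
    obtain ⟨j, t₁, ht₁I, hne₁⟩ := hAll
    have hprodA : ∀ t ∈ I, (lam j t - lam i0 t) * (c * psi t - (1+c^2)/2 * tau t) = 0 := by
      intro t ht
      linear_combination hkey j t ht - hkey i0 t ht
    have hAanalytic : AnalyticOnNhd ℝ (fun s => c * psi s - (1+c^2)/2 * tau s) I :=
      (analyticOnNhd_const.mul hpsi).sub (analyticOnNhd_const.mul htauA)
    have hAzero : Set.EqOn (fun s => c * psi s - (1+c^2)/2 * tau s) 0 I := by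
      apply prod_eq_zero_aux hIpre hI hAanalytic hprodA ht₁I
        (((hlam j t₁ ht₁I).sub (hlam i0 t₁ ht₁I)).continuousAt)
      exact sub_ne_zero_of_ne hne₁
    have hc0 : c ≠ 0 := by
      intro hc0
      apply ht₀
      have := hAzero ht₀I
      simp only [hc0, Pi.zero_apply] at this
      nlinarith [this]
    -- derive tau = 0 on I, contradiction
    apply ht₀
    have ht := ht₀I
    set t := t₀
    have hA : c * psi t - (1+c^2)/2 * tau t = 0 := hAzero ht
    have hB : deriv psi t + c * (tau t / 2) * psi t - (psi t)^2 = 0 := by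
      linear_combination lam i0 t * hA - hkey i0 t ht
    -- derivative of c * psi via the relation c psi = ((1+c²)/2) tau
    have hDev : HasDerivAt (fun s => c * psi s)
        ((1+c^2)/2 * (2/3 * ∑ i, (tau t / 2 + lam i t) * mu i t)) t := by
      have hev : (fun s => c * psi s) =ᶠ[𝓝 t] fun s => (1+c^2)/2 * tau s := by
        filter_upwards [hI.mem_nhds ht] with s hs
        have := hAzero hs
        simp only [Pi.zero_apply] at this
        linarith [this]
      exact ((htau' t ht).const_mul ((1+c^2)/2)).congr_of_eventuallyEq hev
    have hD : c * deriv psi t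
        = (1+c^2)/2 * (2/3 * ∑ i, (tau t / 2 + lam i t) * mu i t) :=
      ((hpsi' t ht).const_mul c).unique hDev
    -- expand the sum
    have hgt : ∑ i, (tau t / 2 + lam i t) * mu i t
        = c * (∑ i, (lam i t)^2) + (psi t + c * (tau t / 2)) * (∑ i, lam i t)
          + (n₁:ℝ) * ((tau t / 2) * psi t) := by
      have hterm : ∀ i ∈ Finset.univ, (tau t / 2 + lam i t) * mu i t
          = c * (lam i t)^2 + (psi t + c * (tau t / 2)) * lam i t
            + (tau t / 2) * psi t := fun i _ => by rw [hlin' i t ht]; ring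
      rw [Finset.sum_congr rfl hterm, Finset.sum_add_distrib, Finset.sum_add_distrib,
        ← Finset.mul_sum, ← Finset.mul_sum, Finset.sum_const, Finset.card_univ,
        Fintype.card_fin, nsmul_eq_mul]
    rw [hgt] at hD
    have hS1 : ∑ i, lam i t = 3/2 * tau t := by
      have h := htau t
      linarith
    rw [hS1] at hD
    have hS2 : 0 ≤ ∑ i, (lam i t)^2 := Finset.sum_nonneg fun i _ => sq_nonneg _
    have hfin : (1+c^2) * (4*c^2*(∑ i, (lam i t)^2)
        + (tau t)^2*(6*c^2 + (n₁:ℝ)*(1+c^2))) = 0 := by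
      linear_combination 12*c^2*hB - 12*c*hD
        + 12*(c*psi t - c^2*(tau t)/2 - ((n₁:ℝ)/3)*((1+c^2)/2)*(tau t))*hA
    have h1c : (0:ℝ) < 1+c^2 := by positivity
    have hred : 4*c^2*(∑ i, (lam i t)^2)
        + (tau t)^2*(6*c^2 + (n₁:ℝ)*(1+c^2)) = 0 :=
      (mul_eq_zero.mp hfin).resolve_left (ne_of_gt h1c)
    have hc2 : (0:ℝ) < c^2 := by positivity
    have hTz : (tau t)^2 ≤ 0 := by
      nlinarith [hS2, sq_nonneg (tau t), hν, hc2,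
        mul_nonneg (sq_nonneg c) hS2,
        mul_nonneg (sq_nonneg (tau t)) (sq_nonneg c)]
    exact pow_eq_zero_iff two_ne_zero |>.mp (le_antisymm hTz (sq_nonneg _))
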